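/- If a sequence x_k converges to x̄, d_k is a minimizer of the problem min_{‖d‖≤1} max_{i∈{1,…,m}} ∇f_i(x_k)ᵀd for each k, and d_k converges to d̄, then d̄ is a minimizer of min_{‖d‖≤1} max_{i∈{1,…,m}} ∇f_i(x̄)ᵀd. -/

import Mathlib

open scoped RealInnerProductSpace

/-- `d` is a minimizer of `max_i ⟪∇f_i(x), d⟫` over the closed unit ball. -/
def IsMinimizer {n m : ℕ} [NeZero m] (f : Fin m → EuclideanSpace ℝ (Fin n) → ℝ)
    (x d : EuclideanSpace ℝ (Fin n)) : Prop :=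
  ‖d‖ ≤ 1 ∧ ∀ d' : EuclideanSpace ℝ (Fin n), ‖d'‖ ≤ 1 →
    Finset.univ.sup' Finset.univ_nonempty (fun i => ⟪gradient (f i) x, d⟫) ≤
      Finset.univ.sup' Finset.univ_nonempty (fun i => ⟪gradient (f i) x, d'⟫)

lemma grad_cont {n : ℕ} (g : EuclideanSpace ℝ (Fin n) → ℝ) (hg : ContDiff ℝ 1 g) :
    Continuous (gradient g) := by
  have h1 : Continuous (fderiv ℝ g) := hg.continuous_fderiv one_ne_zero
  have : gradient g = fun x =>
      (InnerProductSpace.toDual ℝ (EuclideanSpace ℝ (Fin n))).symm (fderiv ℝ g x) := rfl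
  rw [this]
  exact (InnerProductSpace.toDual ℝ (EuclideanSpace ℝ (Fin n))).symm.continuous.comp h1

theorem stmt5 {n m : ℕ} [NeZero m] (f : Fin m → EuclideanSpace ℝ (Fin n) → ℝ)
    (hf : ∀ i, ContDiff ℝ 1 (f i))
    (x : ℕ → EuclideanSpace ℝ (Fin n)) (d : ℕ → EuclideanSpace ℝ (Fin n))
    (xbar dbar : EuclideanSpace ℝ (Fin n))
    (hx : Filter.Tendsto x Filter.atTop (nhds xbar))
    (hd : Filter.Tendsto d Filter.atTop (nhds dbar))
    (hmin : ∀ k, IsMinimizer f (x k) (d k)) :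
    IsMinimizer f xbar dbar := by
  have hgc : ∀ i, Filter.Tendsto (fun k => gradient (f i) (x k)) Filter.atTop
      (nhds (gradient (f i) xbar)) := fun i =>
    ((grad_cont (f i) (hf i)).continuousAt.tendsto).comp hx
  constructor
  · have : Filter.Tendsto (fun k => ‖d k‖) Filter.atTop (nhds ‖dbar‖) :=
      (continuous_norm.continuousAt.tendsto).comp hd
    exact le_of_tendsto' this fun k => (hmin k).1
  · intro d' hd'
    have hL : Filter.Tendsto
        (fun k => Finset.univ.sup' Finset.univ_nonempty
          (fun i => ⟪gradient (f i) (x k), d k⟫)) Filter.atTop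
        (nhds (Finset.univ.sup' Finset.univ_nonempty
          (fun i => ⟪gradient (f i) xbar, dbar⟫))) := by
      apply Filter.Tendsto.finset_sup'_nhds_apply
      intro i _
      exact Filter.Tendsto.inner (hgc i) hd
    have hR : Filter.Tendsto
        (fun k => Finset.univ.sup' Finset.univ_nonempty
          (fun i => ⟪gradient (f i) (x k), d'⟫)) Filter.atTop
        (nhds (Finset.univ.sup' Finset.univ_nonempty
          (fun i => ⟪gradient (f i) xbar, d'⟫))) := by
      apply Filter.Tendsto.finset_sup'_nhds_apply
      intro i _
      exact Filter.Tendsto.inner (hgc i) tendsto_const_nhds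
    exact le_of_tendsto_of_tendsto' hL hR fun k => (hmin k).2 d' hd'
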